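/- Let ρ > 0 and let B be a p×p real symmetric matrix with spectral decomposition B = Q Λ Qᵀ, where Q is a p×p orthogonal matrix and Λ is the diagonal matrix with diagonal entries δ₁,…,δ_p. Define Ω := Q Λ' Qᵀ, where Λ' is the diagonal matrix with entries Λ'_{jj} = (δ_j + √(δ_j² + 4ρ))/(2ρ). Then Ω is symmetric positive definite and satisfies the first-order optimality condition ρ Ω − Ω⁻¹ = B. -/

import Mathlib

open Matrix

theorem stmt_7 {p : ℕ} (ρ : ℝ) (hρ : 0 < ρ)
    (B Q : Matrix (Fin p) (Fin p) ℝ) (δ : Fin p → ℝ)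
    (hQ : Q * Qᵀ = 1 ∧ Qᵀ * Q = 1)
    (hB : B = Q * Matrix.diagonal δ * Qᵀ)
    (Ω : Matrix (Fin p) (Fin p) ℝ)
    (hΩ : Ω = Q * Matrix.diagonal
      (fun j => (δ j + Real.sqrt ((δ j) ^ 2 + 4 * ρ)) / (2 * ρ)) * Qᵀ) :
    Ω.PosDef ∧ ρ • Ω - Ω⁻¹ = B := by
  obtain ⟨hQ1, hQ2⟩ := hQ
  set lam : Fin p → ℝ := fun j => (δ j + Real.sqrt ((δ j) ^ 2 + 4 * ρ)) / (2 * ρ) with hlam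
  have hsq : ∀ j, Real.sqrt ((δ j) ^ 2 + 4 * ρ) ^ 2 = (δ j) ^ 2 + 4 * ρ := by
    intro j
    exact Real.sq_sqrt (by positivity)
  have hlampos : ∀ j, 0 < lam j := by
    intro j
    have h1 : |δ j| < Real.sqrt ((δ j) ^ 2 + 4 * ρ) := by
      have : |δ j| = Real.sqrt ((δ j) ^ 2) := by
        rw [Real.sqrt_sq_eq_abs]
      rw [this]
      apply Real.sqrt_lt_sqrt (by positivity)
      linarith
    have : -δ j < Real.sqrt ((δ j) ^ 2 + 4 * ρ) := lt_of_le_of_lt (neg_le_abs _) h1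
    have hnum : 0 < δ j + Real.sqrt ((δ j) ^ 2 + 4 * ρ) := by linarith
    exact div_pos hnum (by linarith)
  have hDpos : (Matrix.diagonal lam).PosDef := Matrix.posDef_diagonal_iff.mpr hlampos
  have hposdef : Ω.PosDef := by
    rw [hΩ]
    refine Matrix.PosDef.of_dotProduct_mulVec_pos ?_ ?_
    · simpa using Matrix.isHermitian_mul_mul_conjTranspose Q hDpos.1
    · intro x hx
      have hy : Qᵀ *ᵥ x ≠ 0 := by
        intro h
        apply hx
        have := congrArg (fun v => Q *ᵥ v) h
        simpa [Matrix.mulVec_mulVec, hQ1] using this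
      have := hDpos.dotProduct_mulVec_pos hy
      simpa [← Matrix.mulVec_mulVec, Matrix.dotProduct_mulVec, Matrix.mulVec_transpose,
        Matrix.mul_assoc] using this
  refine ⟨hposdef, ?_⟩
  have hinv : Ω⁻¹ = Q * Matrix.diagonal (fun j => (lam j)⁻¹) * Qᵀ := by
    apply Matrix.inv_eq_right_inv
    rw [hΩ]
    calc Q * Matrix.diagonal lam * Qᵀ * (Q * Matrix.diagonal (fun j => (lam j)⁻¹) * Qᵀ)
        = Q * (Matrix.diagonal lam * (Qᵀ * Q) * Matrix.diagonal (fun j => (lam j)⁻¹)) * Qᵀ := by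
          noncomm_ring
      _ = 1 := by
          rw [hQ2, mul_one, Matrix.diagonal_mul_diagonal]
          have : (fun j => lam j * (lam j)⁻¹) = fun _ => (1:ℝ) := by
            funext j; exact mul_inv_cancel₀ (hlampos j).ne'
          rw [this, Matrix.diagonal_one, mul_one, hQ1]
  rw [hinv, hΩ, hB]
  have key : ∀ j, ρ * lam j - (lam j)⁻¹ = δ j := by
    intro j
    have hne : lam j ≠ 0 := (hlampos j).ne'
    have h2 : (2:ℝ) * ρ ≠ 0 := by positivity
    have hl : lam j * (2 * ρ) = δ j + Real.sqrt ((δ j) ^ 2 + 4 * ρ) := by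
      rw [hlam]; field_simp
    clear_value lam
    have hs2 : (lam j * (2 * ρ) - δ j) ^ 2 = δ j ^ 2 + 4 * ρ := by
      rw [hl, add_sub_cancel_left]; exact hsq j
    have hmul : ρ * lam j * lam j - δ j * lam j - 1 = 0 := by
      have h4 : (4 * ρ) * (ρ * lam j * lam j - δ j * lam j - 1) = 0 := by
        linear_combination hs2
      rcases mul_eq_zero.mp h4 with h | h
      · exact absurd h (by positivity)
      · exact h
    have hkey : (ρ * lam j - (lam j)⁻¹) * lam j = δ j * lam j := by
      calc (ρ * lam j - (lam j)⁻¹) * lam j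
          = ρ * lam j * lam j - (lam j)⁻¹ * lam j := by ring
        _ = ρ * lam j * lam j - 1 := by rw [inv_mul_cancel₀ hne]
        _ = δ j * lam j := by linarith [hmul]
    exact mul_right_cancel₀ hne hkey
  calc ρ • (Q * Matrix.diagonal lam * Qᵀ) - Q * Matrix.diagonal (fun j => (lam j)⁻¹) * Qᵀ
      = Q * (ρ • Matrix.diagonal lam - Matrix.diagonal (fun j => (lam j)⁻¹)) * Qᵀ := by
        simp only [Matrix.mul_sub, Matrix.sub_mul, Matrix.mul_smul, Matrix.smul_mul]
    _ = Q * Matrix.diagonal δ * Qᵀ := by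
        congr 1
        congr 1
        ext i j
        rcases eq_or_ne i j with h | h
        · subst h
          simp only [Matrix.sub_apply, Matrix.smul_apply, Matrix.diagonal_apply_eq,
            smul_eq_mul]
          exact key i
        · simp [Matrix.diagonal_apply_ne _ h]
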